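/- There exists a reflexive, transitive, strongly convergent frame with constant domain D (with at least two elements), predicates P, Q : D → W → Prop with P(a) pointwise implying Q(a) for every a ∈ D at every world, and a world w such that [K^MS_FS] for P holds at w but [K^MS_FS] for Q fails at w. That is, the monotonicity rule (from φ → ψ valid, infer [K^MS_FS]^x φ → [K^MS_FS]^x ψ valid) is not sound on S4.2-constant-domain models. -/
import Mathlib


def RB {W : Type*} (R : W → W → Prop) (w u : W) : Prop := ∀ v, R w v → R v u

theorem KMSFS_not_monotone :
    ∃ (W : Type) (R : W → W → Prop) (D : Type) (P Q : D → W → Prop) (w : W),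
      (∃ a b : D, a ≠ b) ∧
      (∀ x, R x x) ∧ (∀ x y z, R x y → R y z → R x z) ∧
      (∀ x, ∃ u, ∀ v, R x v → R v u) ∧
      (∀ (a : D) (v : W), P a v → Q a v) ∧
      ((∃ a, ∀ v, R w v → P a v) ∧ (∀ b, (∀ u, RB R w u → P b u) → P b w)) ∧
      ¬ ((∃ a, ∀ v, R w v → Q a v) ∧ (∀ b, (∀ u, RB R w u → Q b u) → Q b w)) := by
  refine ⟨Bool, fun x y => x = true → y = true, Bool,
    fun a _ => a = true, fun a v => a = true ∨ v = true, false,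
    ⟨true, false, by simp⟩, fun x h => h, fun x y z h1 h2 h => h2 (h1 h),
    fun x => ⟨true, fun v _ _ => rfl⟩, fun a v h => Or.inl h,
    ⟨⟨true, fun _ _ => rfl⟩, fun b h => h true (fun v _ _ => rfl)⟩, ?_⟩
  rintro ⟨-, h2⟩
  have := h2 false (fun u hu => Or.inr ((hu true (fun _ => rfl)) rfl))
  simp at this
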